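/- Let A : ℝ^N → ℝ^N be a C¹ vector potential and set B_{jk} := ∂_j A_k − ∂_k A_j. Then for all points a, b, c ∈ ℝ^N the circulation of A around the boundary of the triangle ⟨a,b,c⟩ equals the flux of B through it, i.e. Γ^A[a,b] + Γ^A[b,c] + Γ^A[c,a] = Γ^B⟨a,b,c⟩, where the flux is given by the parametrization Γ^B⟨a,b,c⟩ = Σ_{j,k} (b_j − a_j)(c_k − b_k) ∫₀¹∫₀¹ μ B_{jk}(a + μ(b−a) + μν(c−b)) dν dμ. -/

import Mathlib

open MeasureTheory Filter Topology Real

noncomputable section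

abbrev Vec (N : ℕ) := Fin N → ℝ

/-- Circulation `Γ^A[x,y]` of the vector potential `A` along the segment from `x` to `y`. -/
def circA {N : ℕ} (A : Vec N → Vec N) (x y : Vec N) : ℝ :=
  ∫ s in (0:ℝ)..1, ∑ j, (y j - x j) * A (x + s • (y - x)) j

/-- Flux `Γ^B⟨a,b,c⟩` of the magnetic field `B` through the triangle with vertices
`a`, `b`, `c`, given by the standard parametrization. -/
def fluxB {N : ℕ} (B : Fin N → Fin N → Vec N → ℝ) (a b c : Vec N) : ℝ :=
  ∑ j, ∑ k, (b j - a j) * (c k - b k) *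
    ∫ μ in (0:ℝ)..1, ∫ ν in (0:ℝ)..1, μ * B j k (a + μ • (b - a) + (μ * ν) • (c - b))

/-- The magnetic field of a vector potential: `(Bof A) j k = ∂_j A_k - ∂_k A_j`. -/
def Bof {N : ℕ} (A : Vec N → Vec N) (j k : Fin N) (x : Vec N) : ℝ :=
  fderiv ℝ (fun y => A y k) x (Pi.single j 1) - fderiv ℝ (fun y => A y j) x (Pi.single k 1)

/-! ### Auxiliary definitions and lemmas -/

/-- The standard parametrization of the triangle. -/
def phiT {N : ℕ} (a b c : Vec N) (p : ℝ × ℝ) : Vec N :=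
  a + p.1 • (b - a) + (p.1 * p.2) • (c - b)

/-- Pullback 1-form coefficient in the `ν` direction. -/
def Fc {N : ℕ} (A : Vec N → Vec N) (a b c : Vec N) (p : ℝ × ℝ) : ℝ :=
  ∑ k, p.1 * (c k - b k) * A (phiT a b c p) k

/-- Negative of the pullback 1-form coefficient in the `μ` direction. -/
def Gc {N : ℕ} (A : Vec N → Vec N) (a b c : Vec N) (p : ℝ × ℝ) : ℝ :=
  -∑ j, (b j - a j + p.2 * (c j - b j)) * A (phiT a b c p) j

lemma contDiff_phiT {N : ℕ} (a b c : Vec N) : ContDiff ℝ 1 (phiT a b c) :=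
  (contDiff_const.add (contDiff_fst.smul contDiff_const)).add
    ((contDiff_fst.mul contDiff_snd).smul contDiff_const)

lemma fderiv_apply_sum {N : ℕ} {f : Vec N → ℝ} (hf : Differentiable ℝ f) (u v : Vec N) :
    fderiv ℝ f u v = ∑ j, v j * fderiv ℝ f u (Pi.single j 1) := by
  have h : v = ∑ j, v j • (Pi.single j 1 : Vec N) := by
    ext i
    simp [Pi.single_apply, Finset.sum_apply]
  conv_lhs => rw [h]
  rw [map_sum]
  simp [smul_eq_mul]

lemma Bof_antisymm {N : ℕ} (A : Vec N → Vec N) (j k : Fin N) (x : Vec N) :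
    Bof A k j x = - Bof A j k x := by
  simp [Bof]

lemma sum_antisym {N : ℕ} (A : Vec N → Vec N) (t : Vec N) (x : Vec N) :
    ∑ j, ∑ k, t j * t k * Bof A j k x = 0 := by
  have h : (∑ j, ∑ k, t j * t k * Bof A j k x)
      = -∑ j, ∑ k, t j * t k * Bof A j k x := by
    calc ∑ j, ∑ k, t j * t k * Bof A j k x
        = ∑ k, ∑ j, t j * t k * Bof A j k x := Finset.sum_comm
      _ = ∑ k, ∑ j, -(t k * t j * Bof A k j x) := by
          refine Finset.sum_congr rfl fun k _ => Finset.sum_congr rfl fun j _ => ?_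
          rw [Bof_antisymm A j k x]
          ring
      _ = -∑ j, ∑ k, t j * t k * Bof A j k x := by
          simp
  linarith

lemma finsum_alg {N : ℕ} (u v : Vec N) (P Q : Fin N → Fin N → ℝ) :
    (∑ k, v k * ∑ j, u j * P j k) - (∑ j, u j * ∑ k, v k * Q j k)
      = ∑ j, ∑ k, u j * v k * (P j k - Q j k) := by
  simp only [Finset.mul_sum]
  rw [Finset.sum_comm (s := Finset.univ) (t := Finset.univ)
    (f := fun k j => v k * (u j * P j k)), ← Finset.sum_sub_distrib]
  refine Finset.sum_congr rfl fun j _ => ?_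
  rw [← Finset.sum_sub_distrib]
  exact Finset.sum_congr rfl fun k _ => by ring

/-- Stokes' theorem for triangles: the circulation of a `C¹` vector potential `A` around the
boundary of the triangle `⟨a,b,c⟩` equals the flux of `B = dA` through it. -/
theorem circulation_eq_flux {N : ℕ} (A : Vec N → Vec N) (hA : ContDiff ℝ 1 A)
    (a b c : Vec N) :
    circA A a b + circA A b c + circA A c a = fluxB (Bof A) a b c := by
  have hAc : ∀ k : Fin N, ContDiff ℝ 1 (fun y => A y k) := fun k => contDiff_pi.1 hA k
  have hφc : ContDiff ℝ 1 (phiT a b c) := contDiff_phiT a b c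
  have hF : ContDiff ℝ 1 (Fc A a b c) :=
    ContDiff.sum fun k _ =>
      (contDiff_fst.mul contDiff_const).mul ((hAc k).comp hφc)
  have hG : ContDiff ℝ 1 (Gc A a b c) :=
    (ContDiff.sum fun j _ =>
      (contDiff_const.add (contDiff_snd.mul contDiff_const)).mul ((hAc j).comp hφc)).neg
  -- the partial derivative of `Fc` in the `μ` direction
  have hdF : ∀ μ ν : ℝ, fderiv ℝ (Fc A a b c) (μ, ν) (1, 0) =
      ∑ k, ((c k - b k) * A (phiT a b c (μ, ν)) k
        + μ * (c k - b k) *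
          fderiv ℝ (fun y => A y k) (phiT a b c (μ, ν)) (b - a + ν • (c - b))) := by
    intro μ ν
    have h1 : HasDerivAt (fun x => Fc A a b c (x, ν)) (fderiv ℝ (Fc A a b c) (μ, ν) (1, 0)) μ :=
      by have := ((hF.differentiable one_ne_zero (μ, ν)).hasFDerivAt).comp_hasDerivAt μ
            ((hasDerivAt_id' μ).prodMk (hasDerivAt_const μ ν))
         exact this
    have hψ : HasDerivAt (fun x : ℝ => phiT a b c (x, ν)) (b - a + ν • (c - b)) μ := by
      have h1' := (((hasDerivAt_id' μ).smul_const (b - a)).const_add a)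
      have h2' := (((hasDerivAt_id' μ).mul_const ν).smul_const (c - b))
      have := h1'.fun_add h2'
      simpa [phiT] using this
    have h2 : HasDerivAt (fun x => Fc A a b c (x, ν))
        (∑ k, ((c k - b k) * A (phiT a b c (μ, ν)) k
          + μ * (c k - b k) *
            fderiv ℝ (fun y => A y k) (phiT a b c (μ, ν)) (b - a + ν • (c - b)))) μ := by
      simp only [Fc]
      apply HasDerivAt.fun_sum
      intro k _
      have hak : HasDerivAt (fun x : ℝ => A (phiT a b c (x, ν)) k)
          (fderiv ℝ (fun y => A y k) (phiT a b c (μ, ν)) (b - a + ν • (c - b))) μ :=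
        (((hAc k).differentiable one_ne_zero _).hasFDerivAt).comp_hasDerivAt μ hψ
      have := ((hasDerivAt_id' μ).mul_const (c k - b k)).fun_mul hak
      simpa using this
    exact h1.unique h2
  -- the partial derivative of `Gc` in the `ν` direction
  have hdG : ∀ μ ν : ℝ, fderiv ℝ (Gc A a b c) (μ, ν) (0, 1) =
      -∑ j, ((c j - b j) * A (phiT a b c (μ, ν)) j
        + (b j - a j + ν * (c j - b j)) *
          fderiv ℝ (fun y => A y j) (phiT a b c (μ, ν)) (μ • (c - b))) := by
    intro μ ν
    have h1 : HasDerivAt (fun y => Gc A a b c (μ, y)) (fderiv ℝ (Gc A a b c) (μ, ν) (0, 1)) ν :=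
      ((hG.differentiable one_ne_zero (μ, ν)).hasFDerivAt).comp_hasDerivAt ν
        ((hasDerivAt_const ν μ).prodMk (hasDerivAt_id' ν))
    have hχ : HasDerivAt (fun y : ℝ => phiT a b c (μ, y)) (μ • (c - b)) ν := by
      have h2' := ((((hasDerivAt_id' ν).const_mul μ).smul_const (c - b)).const_add
        (a + μ • (b - a)))
      simpa [phiT] using h2'
    have h2 : HasDerivAt (fun y => Gc A a b c (μ, y))
        (-∑ j, ((c j - b j) * A (phiT a b c (μ, ν)) j
          + (b j - a j + ν * (c j - b j)) *
            fderiv ℝ (fun y => A y j) (phiT a b c (μ, ν)) (μ • (c - b)))) ν := by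
      simp only [Gc]
      apply HasDerivAt.fun_neg
      apply HasDerivAt.fun_sum
      intro j _
      have haj : HasDerivAt (fun y : ℝ => A (phiT a b c (μ, y)) j)
          (fderiv ℝ (fun y => A y j) (phiT a b c (μ, ν)) (μ • (c - b))) ν :=
        (((hAc j).differentiable one_ne_zero _).hasFDerivAt).comp_hasDerivAt ν hχ
      have := (((hasDerivAt_id' ν).mul_const (c j - b j)).const_add (b j - a j)).fun_mul haj
      simpa [add_comm] using this
    exact h1.unique h2
  -- divergence identity
  have hdiv : ∀ μ ν : ℝ,
      fderiv ℝ (Fc A a b c) (μ, ν) (1, 0) + fderiv ℝ (Gc A a b c) (μ, ν) (0, 1)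
        = ∑ j, ∑ k, (b j - a j) * (c k - b k) * (μ * Bof A j k (phiT a b c (μ, ν))) := by
    intro μ ν
    rw [hdF μ ν, hdG μ ν]
    set u := phiT a b c (μ, ν) with hu
    have e1 : ∀ k : Fin N, fderiv ℝ (fun y => A y k) u (b - a + ν • (c - b))
        = ∑ j, (b j - a j + ν * (c j - b j)) * fderiv ℝ (fun y => A y k) u (Pi.single j 1) := by
      intro k
      rw [fderiv_apply_sum ((hAc k).differentiable one_ne_zero)]
      refine Finset.sum_congr rfl fun j _ => ?_
      simp
    have e2 : ∀ j : Fin N, fderiv ℝ (fun y => A y j) u (μ • (c - b))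
        = ∑ k, (μ * (c k - b k)) * fderiv ℝ (fun y => A y j) u (Pi.single k 1) := by
      intro j
      rw [fderiv_apply_sum ((hAc j).differentiable one_ne_zero)]
      refine Finset.sum_congr rfl fun k _ => ?_
      simp
    simp only [e1, e2]
    rw [Finset.sum_add_distrib, Finset.sum_add_distrib, neg_add]
    have hcancel : (∑ k, (c k - b k) * A u k) + (∑ k, μ * (c k - b k) *
          ∑ j, (b j - a j + ν * (c j - b j)) * fderiv ℝ (fun y => A y k) u (Pi.single j 1))
        + (-(∑ j, (c j - b j) * A u j) + -(∑ j, (b j - a j + ν * (c j - b j)) *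
          ∑ k, μ * (c k - b k) * fderiv ℝ (fun y => A y j) u (Pi.single k 1)))
        = (∑ k, (μ * (c k - b k)) *
          ∑ j, (b j - a j + ν * (c j - b j)) * fderiv ℝ (fun y => A y k) u (Pi.single j 1))
        - (∑ j, (b j - a j + ν * (c j - b j)) *
          ∑ k, (μ * (c k - b k)) * fderiv ℝ (fun y => A y j) u (Pi.single k 1)) := by
      ring
    rw [hcancel, finsum_alg]
    have hBdef : ∀ j k : Fin N,
        fderiv ℝ (fun y => A y k) u (Pi.single j 1) - fderiv ℝ (fun y => A y j) u (Pi.single k 1)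
          = Bof A j k u := fun j k => rfl
    simp only [hBdef]
    have hsplit : ∀ j k : Fin N,
        (b j - a j + ν * (c j - b j)) * (μ * (c k - b k)) * Bof A j k u
          = (b j - a j) * (c k - b k) * (μ * Bof A j k u)
            + (μ * ν) * ((c j - b j) * ((c k - b k) * Bof A j k u)) := by
      intro j k; ring
    simp only [hsplit]
    rw [show (∑ j, ∑ k, ((b j - a j) * (c k - b k) * (μ * Bof A j k u)
        + (μ * ν) * ((c j - b j) * ((c k - b k) * Bof A j k u))))
      = (∑ j, ∑ k, (b j - a j) * (c k - b k) * (μ * Bof A j k u))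
        + (μ * ν) * ∑ j, ∑ k, (c j - b j) * ((c k - b k) * Bof A j k u) from by
      simp [Finset.sum_add_distrib, Finset.mul_sum]]
    have hz : (∑ j, ∑ k, (c j - b j) * ((c k - b k) * Bof A j k u)) = 0 := by
      have := sum_antisym A (fun i => c i - b i) u
      simpa [mul_assoc] using this
    rw [hz, mul_zero, add_zero]
  -- continuity facts
  have hcontB : ∀ j k : Fin N, Continuous (Bof A j k) := by
    intro j k
    exact ((((hAc k).continuous_fderiv one_ne_zero).clm_apply continuous_const).sub
      ((((hAc j).continuous_fderiv one_ne_zero)).clm_apply continuous_const))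
  -- divergence theorem on the unit square
  have Hi : IntegrableOn
      (fun p : ℝ × ℝ => fderiv ℝ (Fc A a b c) p (1, 0) + fderiv ℝ (Gc A a b c) p (0, 1))
      (Set.uIcc (0:ℝ) 1 ×ˢ Set.uIcc (0:ℝ) 1) := by
    have hcont : Continuous (fun p : ℝ × ℝ =>
        fderiv ℝ (Fc A a b c) p (1, 0) + fderiv ℝ (Gc A a b c) p (0, 1)) :=
      ((hF.continuous_fderiv one_ne_zero).clm_apply continuous_const).add
        ((hG.continuous_fderiv one_ne_zero).clm_apply continuous_const)
    exact hcont.continuousOn.integrableOn_compact (isCompact_uIcc.prod isCompact_uIcc)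
  have key := MeasureTheory.integral2_divergence_prod_of_hasFDerivAt_off_countable
    (Fc A a b c) (Gc A a b c)
    (fun p => fderiv ℝ (Fc A a b c) p) (fun p => fderiv ℝ (Gc A a b c) p)
    0 0 1 1 ∅ Set.countable_empty
    (hF.continuous.continuousOn) (hG.continuous.continuousOn)
    (fun x _ => (hF.differentiable one_ne_zero x).hasFDerivAt)
    (fun x _ => (hG.differentiable one_ne_zero x).hasFDerivAt) Hi
  -- boundary identifications
  have hb1 : (∫ x in (0:ℝ)..1, Gc A a b c (x, 1))
      = -∫ s in (0:ℝ)..1, ∑ j, (c j - a j) * A (a + s • (c - a)) j := by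
    have h : ∀ x : ℝ, Gc A a b c (x, 1) = -∑ j, (c j - a j) * A (a + x • (c - a)) j := by
      intro x
      simp only [Gc]
      congr 1
      refine Finset.sum_congr rfl fun j _ => ?_
      have hv : phiT a b c (x, 1) = a + x • (c - a) := by
        funext i
        simp only [phiT, Pi.add_apply, Pi.smul_apply, Pi.sub_apply, smul_eq_mul]
        ring
      rw [hv]; ring
    simp only [h]
    rw [intervalIntegral.integral_neg]
  have hb2 : (∫ x in (0:ℝ)..1, Gc A a b c (x, 0)) = -circA A a b := by
    have h : ∀ x : ℝ, Gc A a b c (x, 0) = -∑ j, (b j - a j) * A (a + x • (b - a)) j := by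
      intro x
      simp only [Gc]
      congr 1
      refine Finset.sum_congr rfl fun j _ => ?_
      have hv : phiT a b c (x, 0) = a + x • (b - a) := by
        funext i
        simp only [phiT, Pi.add_apply, Pi.smul_apply, Pi.sub_apply, smul_eq_mul]
        ring
      rw [hv]; ring
    simp only [h]
    rw [intervalIntegral.integral_neg, circA]
  have hb3 : (∫ y in (0:ℝ)..1, Fc A a b c (1, y)) = circA A b c := by
    have h : ∀ y : ℝ, Fc A a b c (1, y) = ∑ k, (c k - b k) * A (b + y • (c - b)) k := by
      intro y
      simp only [Fc]
      refine Finset.sum_congr rfl fun k _ => ?_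
      have hv : phiT a b c (1, y) = b + y • (c - b) := by
        funext i
        simp only [phiT, Pi.add_apply, Pi.smul_apply, Pi.sub_apply, smul_eq_mul]
        ring
      rw [hv]; ring
    simp only [h]
    rw [circA]
  have hb4 : (∫ y in (0:ℝ)..1, Fc A a b c (0, y)) = 0 := by
    have h : ∀ y : ℝ, Fc A a b c (0, y) = 0 := by
      intro y; simp [Fc]
    simp only [h]
    simp
  have hb5 : circA A c a = -∫ s in (0:ℝ)..1, ∑ j, (c j - a j) * A (a + s • (c - a)) j := by
    rw [circA]
    have h : ∀ s : ℝ, (∑ j, (a j - c j) * A (c + s • (a - c)) j)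
        = -∑ j, (c j - a j) * A (a + (1 - s) • (c - a)) j := by
      intro s
      rw [← Finset.sum_neg_distrib]
      refine Finset.sum_congr rfl fun j _ => ?_
      have hv : c + s • (a - c) = a + (1 - s) • (c - a) := by
        funext i
        simp only [Pi.add_apply, Pi.smul_apply, Pi.sub_apply, smul_eq_mul]
        ring
      rw [hv]; ring
    simp only [h]
    rw [intervalIntegral.integral_neg]
    congr 1
    have hcomp := intervalIntegral.integral_comp_sub_left
      (a := (0:ℝ)) (b := 1) (fun t => ∑ j, (c j - a j) * A (a + t • (c - a)) j) 1
    simpa using hcomp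
  -- identification of the double integral with the flux
  have hcT : ∀ j k : Fin N, Continuous (fun p : ℝ × ℝ =>
      (b j - a j) * (c k - b k) * (p.1 * Bof A j k (phiT a b c p))) := fun j k =>
    continuous_const.mul (continuous_fst.mul ((hcontB j k).comp hφc.continuous))
  have hflux : (∫ x in (0:ℝ)..1, ∫ y in (0:ℝ)..1,
      ∑ j, ∑ k, (b j - a j) * (c k - b k) * (x * Bof A j k (phiT a b c (x, y))))
      = fluxB (Bof A) a b c := by
    calc (∫ x in (0:ℝ)..1, ∫ y in (0:ℝ)..1,
        ∑ j, ∑ k, (b j - a j) * (c k - b k) * (x * Bof A j k (phiT a b c (x, y))))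
        = ∫ x in (0:ℝ)..1, ∑ j, ∑ k, ∫ y in (0:ℝ)..1,
            (b j - a j) * (c k - b k) * (x * Bof A j k (phiT a b c (x, y))) := by
          refine intervalIntegral.integral_congr fun x _ => ?_
          rw [intervalIntegral.integral_finset_sum]
          · exact Finset.sum_congr rfl fun j _ => intervalIntegral.integral_finset_sum
              fun k _ => ((hcT j k).comp (Continuous.prodMk_right x)).intervalIntegrable 0 1
          · intro j _
            exact (continuous_finset_sum _ fun k _ =>
              (hcT j k).comp (Continuous.prodMk_right x)).intervalIntegrable 0 1
      _ = ∑ j, ∑ k, ∫ x in (0:ℝ)..1, ∫ y in (0:ℝ)..1,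
            (b j - a j) * (c k - b k) * (x * Bof A j k (phiT a b c (x, y))) := by
          rw [intervalIntegral.integral_finset_sum]
          · refine Finset.sum_congr rfl fun j _ => ?_
            rw [intervalIntegral.integral_finset_sum]
            intro k _
            exact (intervalIntegral.continuous_parametric_intervalIntegral_of_continuous'
              (f := fun x y => (b j - a j) * (c k - b k) * (x * Bof A j k (phiT a b c (x, y))))
              (by exact (hcT j k).comp (continuous_fst.prodMk continuous_snd)) 0 1
              ).intervalIntegrable 0 1
          · intro j _
            apply Continuous.intervalIntegrable
            apply continuous_finset_sum
            intro k _
            exact intervalIntegral.continuous_parametric_intervalIntegral_of_continuous'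
              (f := fun x y => (b j - a j) * (c k - b k) * (x * Bof A j k (phiT a b c (x, y))))
              (by exact (hcT j k).comp (continuous_fst.prodMk continuous_snd)) 0 1
      _ = fluxB (Bof A) a b c := by
          rw [fluxB]
          refine Finset.sum_congr rfl fun j _ => Finset.sum_congr rfl fun k _ => ?_
          calc (∫ x in (0:ℝ)..1, ∫ y in (0:ℝ)..1,
              (b j - a j) * (c k - b k) * (x * Bof A j k (phiT a b c (x, y))))
              = ∫ x in (0:ℝ)..1, (b j - a j) * (c k - b k) *
                  ∫ y in (0:ℝ)..1, x * Bof A j k (phiT a b c (x, y)) :=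
                intervalIntegral.integral_congr fun x _ =>
                  intervalIntegral.integral_const_mul _ _
            _ = (b j - a j) * (c k - b k) * ∫ x in (0:ℝ)..1, ∫ y in (0:ℝ)..1,
                  x * Bof A j k (phiT a b c (x, y)) :=
                intervalIntegral.integral_const_mul _ _
            _ = (b j - a j) * (c k - b k) * ∫ μ in (0:ℝ)..1, ∫ ν in (0:ℝ)..1,
                  μ * Bof A j k (a + μ • (b - a) + (μ * ν) • (c - b)) := rfl
  -- putting everything together
  calc circA A a b + circA A b c + circA A c a
      = (((∫ x in (0:ℝ)..1, Gc A a b c (x, 1)) - ∫ x in (0:ℝ)..1, Gc A a b c (x, 0))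
          + ∫ y in (0:ℝ)..1, Fc A a b c (1, y)) - ∫ y in (0:ℝ)..1, Fc A a b c (0, y) := by
        rw [hb1, hb2, hb3, hb4, hb5]; ring
    _ = ∫ x in (0:ℝ)..1, ∫ y in (0:ℝ)..1,
          fderiv ℝ (Fc A a b c) (x, y) (1, 0) + fderiv ℝ (Gc A a b c) (x, y) (0, 1) := key.symm
    _ = ∫ x in (0:ℝ)..1, ∫ y in (0:ℝ)..1,
          ∑ j, ∑ k, (b j - a j) * (c k - b k) * (x * Bof A j k (phiT a b c (x, y))) :=
        intervalIntegral.integral_congr fun x _ =>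
          intervalIntegral.integral_congr fun y _ => hdiv x y
    _ = fluxB (Bof A) a b c := hflux

end
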